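/- Let n ≥ 2 be an integer and define F : (−1, 1) → ℝ by F(r) = ⨍_{−1}^{1} T_n(s)/( (s−r)·√(1−s²) ) ds (Cauchy principal value). Then F is differentiable at every r ∈ (−1, 1) and F′(r) = (π/(1−r²))·[ ((n+1)/2)·U_{n−2}(r) − ((n−1)/2)·U_n(r) ]. (F′(r) is the Hadamard finite-part integral ⨎_{−1}^{1} T_n(s)/( (s−r)²·√(1−s²) ) ds.) -/

import Mathlib

open Polynomial Polynomial.Chebyshev Real Filter Set MeasureTheory intervalIntegral

lemma U_deriv (k : ℤ) : (1 - Polynomial.X ^ 2) * derivative (U ℝ k) =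
    Polynomial.X * U ℝ k - ((k : ℝ[X]) + 1) * T ℝ (k + 1) := by
  have h := congrArg derivative (one_sub_X_sq_mul_U_eq_pol_in_T ℝ k)
  simp only [derivative_mul, derivative_sub, derivative_one, derivative_X_pow, derivative_X,
    T_derivative_eq_U, Int.add_sub_cancel, Nat.cast_ofNat, map_ofNat] at h
  have h2 := U_eq_X_mul_U_add_T ℝ k
  push_cast at h ⊢
  linear_combination (norm := ring_nf) h - ((k : ℝ[X]) + 2) * h2

-- evaluated version at s : identity (1-s^2) U'_k(s) = s U_k(s) - (k+1) T_{k+1}(s)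
lemma U_deriv_eval (k : ℤ) (s : ℝ) :
    (1 - s ^ 2) * ((derivative (U ℝ k)).eval s) =
      s * (U ℝ k).eval s - ((k : ℝ) + 1) * (T ℝ (k + 1)).eval s := by
  have := congrArg (Polynomial.eval s) (U_deriv k)
  simpa using this

-- U_{n+1} = U_{n-1} + 2 T_{n+1}
lemma U_succ_eq (k : ℤ) : U ℝ (k + 1) = U ℝ (k - 1) + 2 * T ℝ (k + 1) := by
  have h1 := U_eq_X_mul_U_add_T ℝ k
  have h2 := U_add_one ℝ k
  linear_combination 2 * h1 - h2

lemma cheb_key (r : ℝ) (n : ℕ) (s : ℝ) :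
    (T ℝ (n : ℤ)).eval s - (T ℝ (n : ℤ)).eval r =
    (s - r) * ((U ℝ ((n : ℤ) - 1)).eval r +
      2 * ∑ j ∈ Finset.range (n - 1), (U ℝ (j : ℤ)).eval r * (T ℝ ((n : ℤ) - 1 - j)).eval s) := by
  induction n using Nat.strong_induction_on generalizing s with
  | _ n ih => ?_
  match n with
  | 0 => simp [U_neg_one]
  | 1 => simp [T_one, U_zero]
  | 2 =>
    simp only [Nat.cast_ofNat, T_two, U_one, Finset.sum_range_one, Nat.cast_zero, U_zero]
    norm_num [T_one]
    ring
  | (k+3) =>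
    have e2 := ih (k+2) (by omega) s
    have e1 := ih (k+1) (by omega) s
    push_cast at e2 e1 ⊢
    rw [show ((k:ℤ)+3-1) = (k:ℤ)+2 by ring]
    rw [show ((k:ℤ)+2-1) = (k:ℤ)+1 by ring] at e2
    rw [show ((k:ℤ)+1-1) = (k:ℤ) by ring] at e1
    have hsplit : ∑ j ∈ Finset.range (k+2), (U ℝ (j:ℤ)).eval r * (T ℝ ((k:ℤ)+2-j)).eval s
        = (∑ j ∈ Finset.range (k+1), (U ℝ (j:ℤ)).eval r * (T ℝ ((k:ℤ)+2-j)).eval s)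
          + (U ℝ ((k:ℤ)+1)).eval r * s := by
      rw [Finset.sum_range_succ]
      push_cast
      rw [show (k:ℤ)+2-((k:ℤ)+1) = 1 by ring, T_one]
      simp
    have hptw : ∀ j ∈ Finset.range (k+1), (U ℝ (j:ℤ)).eval r * (T ℝ ((k:ℤ)+2-j)).eval s
        = 2*s*((U ℝ (j:ℤ)).eval r * (T ℝ ((k:ℤ)+1-j)).eval s)
          - (U ℝ (j:ℤ)).eval r * (T ℝ ((k:ℤ)-j)).eval s := by
      intro j hj
      have hT := T_add_two ℝ ((k:ℤ)-j)
      rw [show (k:ℤ)-j+2 = (k:ℤ)+2-j by ring, show (k:ℤ)-j+1 = (k:ℤ)+1-j by ring] at hT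
      have hTe := congrArg (Polynomial.eval s) hT
      simp only [Polynomial.eval_sub, Polynomial.eval_mul, Polynomial.eval_ofNat,
        Polynomial.eval_X] at hTe
      linear_combination (U ℝ (j:ℤ)).eval r * hTe
    have hsum1 : ∑ j ∈ Finset.range (k+1), (U ℝ (j:ℤ)).eval r * (T ℝ ((k:ℤ)+2-j)).eval s
        = 2*s*(∑ j ∈ Finset.range (k+1), (U ℝ (j:ℤ)).eval r * (T ℝ ((k:ℤ)+1-j)).eval s)
          - ∑ j ∈ Finset.range (k+1), (U ℝ (j:ℤ)).eval r * (T ℝ ((k:ℤ)-j)).eval s := by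
      rw [Finset.sum_congr rfl hptw, Finset.sum_sub_distrib, ← Finset.mul_sum]
    have hsum2 : ∑ j ∈ Finset.range (k+1), (U ℝ (j:ℤ)).eval r * (T ℝ ((k:ℤ)-j)).eval s
        = (∑ j ∈ Finset.range k, (U ℝ (j:ℤ)).eval r * (T ℝ ((k:ℤ)-j)).eval s)
          + (U ℝ (k:ℤ)).eval r := by
      rw [Finset.sum_range_succ, show (k:ℤ)-(k:ℤ) = 0 by ring, T_zero]
      simp
    have hU := congrArg (Polynomial.eval r) (U_succ_eq ((k:ℤ)+1))
    rw [show (k:ℤ)+1+1 = (k:ℤ)+2 by ring, show (k:ℤ)+1-1 = (k:ℤ) by ring] at hU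
    simp only [Polynomial.eval_add, Polynomial.eval_mul, Polynomial.eval_ofNat] at hU
    rw [hsplit, hsum1, hsum2]
    have eTs := congrArg (Polynomial.eval s) (T_add_two ℝ ((k:ℤ)+1))
    have eTr := congrArg (Polynomial.eval r) (T_add_two ℝ ((k:ℤ)+1))
    rw [show (k:ℤ)+1+2 = (k:ℤ)+3 by ring, show (k:ℤ)+1+1 = (k:ℤ)+2 by ring] at eTs eTr
    simp only [Polynomial.eval_sub, Polynomial.eval_mul, Polynomial.eval_ofNat,
      Polynomial.eval_X] at eTs eTr
    linear_combination eTs - eTr + 2*s*e2 - e1 - (s-r)*hU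

lemma Npos {r s : ℝ} (hr1 : -1 < r) (hr2 : r < 1) (hs1 : -1 ≤ s) (hs2 : s ≤ 1) (hne : s ≠ r) :
    0 < 1 - r*s - Real.sqrt (1-r^2) * Real.sqrt (1-s^2) := by
  have hw0 : 0 ≤ Real.sqrt (1-r^2) := Real.sqrt_nonneg _
  have hq0 : 0 ≤ Real.sqrt (1-s^2) := Real.sqrt_nonneg _
  have hw2 : Real.sqrt (1-r^2)^2 = 1-r^2 := Real.sq_sqrt (by nlinarith)
  have hq2 : Real.sqrt (1-s^2)^2 = 1-s^2 := Real.sq_sqrt (by nlinarith)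
  have h1 : 0 < 1 - r*s := by nlinarith
  have h3 : (s-r)^2 > 0 := by
    have := sub_ne_zero.mpr hne
    positivity
  nlinarith [mul_nonneg hw0 hq0, sq_nonneg (Real.sqrt (1-r^2) * Real.sqrt (1-s^2) - (1 - r*s))]

noncomputable def Phi (n : ℕ) (r : ℝ) (t : ℝ) : ℝ :=
  (T ℝ (n:ℤ)).eval r * ((1/Real.sqrt (1-r^2)) *
      (Real.log (1 - r*t - Real.sqrt (1-r^2) * Real.sqrt (1-t^2)) - Real.log (t - r)))
    + (U ℝ ((n:ℤ)-1)).eval r * Real.arcsin t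
    - ∑ j ∈ Finset.range (n-1),
        (2 * (U ℝ (j:ℤ)).eval r / ((n:ℝ) - 1 - j)) * (Real.sqrt (1-t^2) * (U ℝ ((n:ℤ)-2-j)).eval t)

lemma Phi_hasDeriv (n : ℕ) {r : ℝ} (hr1 : -1 < r) (hr2 : r < 1)
    {s : ℝ} (hs1 : -1 < s) (hs2 : s < 1) (hne : s ≠ r) :
    HasDerivAt (Phi n r)
      ((T ℝ (n:ℤ)).eval s / ((s - r) * Real.sqrt (1-s^2))) s := by
  have h1r : (0:ℝ) < 1 - r^2 := by nlinarith
  have h1s : (0:ℝ) < 1 - s^2 := by nlinarith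
  have hw0 : 0 < Real.sqrt (1-r^2) := Real.sqrt_pos.mpr h1r
  have hq0 : 0 < Real.sqrt (1-s^2) := Real.sqrt_pos.mpr h1s
  have hw2 : Real.sqrt (1-r^2)^2 = 1-r^2 := Real.sq_sqrt h1r.le
  have hq2 : Real.sqrt (1-s^2)^2 = 1-s^2 := Real.sq_sqrt h1s.le
  have hsr : s - r ≠ 0 := sub_ne_zero.mpr hne
  have hN : 0 < 1 - r*s - Real.sqrt (1-r^2) * Real.sqrt (1-s^2) :=
    Npos hr1 hr2 hs1.le hs2.le hne
  set w := Real.sqrt (1-r^2) with hwdef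
  set q := Real.sqrt (1-s^2) with hqdef
  -- derivative of sqrt(1-t^2)
  have hqd : HasDerivAt (fun t : ℝ => Real.sqrt (1-t^2)) (-s/q) s := by
    have h0 : HasDerivAt (fun t : ℝ => 1 - t^2) (-(2*s)) s := by
      simpa using ((hasDerivAt_pow 2 s).const_sub 1)
    have h := h0.sqrt (by rw [← hqdef] at *; nlinarith)
    convert h using 1
    rw [← hqdef]
    field_simp
  -- derivative of N
  have hNd : HasDerivAt (fun t : ℝ => 1 - r*t - w*Real.sqrt (1-t^2)) (-r - w*(-s/q)) s := by
    have h0 : HasDerivAt (fun t : ℝ => 1 - r*t) (-r) s := by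
      simpa using ((hasDerivAt_id s).const_mul r).const_sub 1
    exact h0.sub (hqd.const_mul w)
  -- derivative of G
  have hG : HasDerivAt (fun t : ℝ => (1/w) *
      (Real.log (1 - r*t - w*Real.sqrt (1-t^2)) - Real.log (t - r)))
      ((1/w) * ((-r - w*(-s/q))/(1 - r*s - w*q) - 1/(s-r))) s := by
    have hl1 := hNd.log hN.ne'
    have hl2 : HasDerivAt (fun t : ℝ => Real.log (t - r)) (1/(s-r)) s := by
      have := ((hasDerivAt_id s).sub_const r).log hsr
      simpa using this
    exact (hl1.sub hl2).const_mul (1/w)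
  -- value of G'
  have hGid : (1/w) * ((-r - w*(-s/q))/(1 - r*s - w*q) - 1/(s-r)) = 1/((s-r)*q) := by
    have hpoly : (w*s - r*q)*(s-r) = (w+q)*(1 - r*s - w*q) := by
      linear_combination q*hw2 + w*hq2
    field_simp
    linear_combination hpoly
  -- arcsin derivative
  have harc : HasDerivAt Real.arcsin (1/q) s := by
    simpa [← hqdef] using Real.hasDerivAt_arcsin hs1.ne' hs2.ne
  -- sum derivative
  have hsum : HasDerivAt (fun t : ℝ => ∑ j ∈ Finset.range (n-1),
      (2 * (U ℝ (j:ℤ)).eval r / ((n:ℝ) - 1 - j)) * (Real.sqrt (1-t^2) * (U ℝ ((n:ℤ)-2-j)).eval t))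
      (∑ j ∈ Finset.range (n-1),
        (-(2 * (U ℝ (j:ℤ)).eval r * (T ℝ ((n:ℤ)-1-j)).eval s)) / q) s := by
    apply HasDerivAt.fun_sum
    intro j hj
    have hjn : j + 2 ≤ n := by have := Finset.mem_range.mp hj; omega
    have hjn' : (j:ℝ) + 2 ≤ (n:ℝ) := by exact_mod_cast hjn
    have hj0 : ((n:ℝ) - 1 - j) ≠ 0 := by linarith
    have hU := (U ℝ ((n:ℤ)-2-j)).hasDerivAt s
    have hprod := (hqd.mul hU).const_mul (2 * (U ℝ (j:ℤ)).eval r / ((n:ℝ) - 1 - j))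
    refine hprod.congr_deriv (Eq.symm ?_)
    rw [← hqdef]
    have hkey := U_deriv_eval ((n:ℤ)-2-j) s
    rw [show (n:ℤ)-2-(j:ℤ)+1 = (n:ℤ)-1-j by ring] at hkey
    push_cast at hkey
    field_simp
    linear_combination (-((U ℝ (j:ℤ)).eval r)) * hkey
      + (-((U ℝ (j:ℤ)).eval r * (derivative (U ℝ ((n:ℤ)-2-j))).eval s)) * hq2
  have h1 := (hG.const_mul ((T ℝ (n:ℤ)).eval r)).add (harc.const_mul ((U ℝ ((n:ℤ)-1)).eval r))
  have htot := h1.sub hsum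
  have hval : (T ℝ (n:ℤ)).eval r * ((1/w) * ((-r - w*(-s/q))/(1 - r*s - w*q) - 1/(s-r)))
      + (U ℝ ((n:ℤ)-1)).eval r * (1/q)
      - (∑ j ∈ Finset.range (n-1), (-(2 * (U ℝ (j:ℤ)).eval r * (T ℝ ((n:ℤ)-1-j)).eval s)) / q)
      = (T ℝ (n:ℤ)).eval s / ((s - r) * q) := by
    rw [hGid]
    have hs : (∑ j ∈ Finset.range (n-1), (-(2 * (U ℝ (j:ℤ)).eval r * (T ℝ ((n:ℤ)-1-j)).eval s)) / q)
        = -(2 * (∑ j ∈ Finset.range (n-1), (U ℝ (j:ℤ)).eval r * (T ℝ ((n:ℤ)-1-j)).eval s)) / q := by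
      rw [← Finset.sum_div]
      congr 1
      rw [Finset.mul_sum, ← Finset.sum_neg_distrib]
      exact Finset.sum_congr rfl (fun j _ => by ring)
    rw [hs]
    have hc := cheb_key r n s
    field_simp
    linear_combination -hc
  rw [← hval]
  exact htot

lemma absT_le (n : ℕ) {x : ℝ} (h1 : -1 ≤ x) (h2 : x ≤ 1) : |(T ℝ (n:ℤ)).eval x| ≤ 1 := by
  rw [← Real.cos_arccos h1 h2, Polynomial.Chebyshev.T_real_cos]
  exact Real.abs_cos_le_one _

lemma integrable_left (n : ℕ) {r ε : ℝ} (hr1 : -1 < r) (hr2 : r < 1) (hε : 0 < ε)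
    (hεδ : ε < 1 + r) :
    IntervalIntegrable (fun s => (T ℝ (n:ℤ)).eval s / ((s - r) * Real.sqrt (1 - s^2)))
      volume (-1) (r - ε) := by
  have hab : (-1:ℝ) ≤ r - ε := by linarith
  have hg : IntervalIntegrable (fun x : ℝ => (1/(ε * Real.sqrt (1-r))) * (x - (-1)) ^ (-(1/2) : ℝ))
      volume (-1) (r - ε) := by
    have h0 : IntervalIntegrable (fun x : ℝ => x ^ (-(1/2) : ℝ)) volume 0 (r - ε + 1) :=
      intervalIntegrable_rpow' (by norm_num)
    have := (h0.comp_sub_right (-1))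
    norm_num at this
    simpa using this.const_mul (1/(ε * Real.sqrt (1-r)))
  apply hg.mono_fun
  · -- AEStronglyMeasurable on uIoc
    apply ContinuousOn.aestronglyMeasurable _ measurableSet_uIoc
    intro x hx
    rw [uIoc_of_le hab] at hx
    have hx1 : -1 < x := hx.1
    have hx2 : x ≤ r - ε := hx.2
    have h1s : (0:ℝ) < 1 - x^2 := by nlinarith
    apply ContinuousWithinAt.div
    · exact (Polynomial.continuous _).continuousWithinAt
    · exact (((continuous_id.sub continuous_const).mul
        ((continuous_const.sub (continuous_pow 2)).sqrt)).continuousWithinAt)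
    · have : x - r ≠ 0 := by intro h; nlinarith [sub_eq_zero.mp h]
      exact mul_ne_zero this (Real.sqrt_ne_zero'.mpr h1s)
  · -- bound
    rw [Filter.EventuallyLE, ae_restrict_iff' measurableSet_uIoc]
    refine Eventually.of_forall ?_
    intro x hx
    rw [uIoc_of_le hab] at hx
    have hx1 : -1 < x := hx.1
    have hx2 : x ≤ r - ε := hx.2
    have hx2' : x ≤ 1 := by linarith
    have h1x : 0 < 1 + x := by linarith
    have h1mx : 0 < 1 - x := by linarith
    have hsm : Real.sqrt (1 - x^2) = Real.sqrt (1-x) * Real.sqrt (1+x) := by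
      rw [← Real.sqrt_mul h1mx.le]
      ring_nf
    have hrx : ε ≤ |x - r| := by
      rw [abs_sub_comm, abs_of_nonneg (by linarith)]
      linarith
    have hb1 : Real.sqrt (1-r) ≤ Real.sqrt (1-x) := Real.sqrt_le_sqrt (by linarith)
    have hpos : 0 < Real.sqrt (1-r) := Real.sqrt_pos.mpr (by linarith)
    have hpx : 0 < Real.sqrt (1+x) := Real.sqrt_pos.mpr h1x
    have hrpow : ((x - (-1)) ^ (-(1/2) : ℝ)) = 1 / Real.sqrt (1+x) := by
      rw [show x - (-1) = 1 + x by ring, Real.rpow_neg (by linarith), Real.sqrt_eq_rpow]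
      norm_num
    simp only [norm_div, norm_mul, Real.norm_eq_abs]
    rw [hrpow, abs_of_pos hε, abs_of_pos hpos, abs_one,
      abs_of_nonneg (Real.sqrt_nonneg (1-x^2)), hsm,
      abs_of_nonneg (by positivity : (0:ℝ) ≤ 1 / Real.sqrt (1+x))]
    have hT := absT_le n hx1.le hx2'
    have hd : ε*Real.sqrt (1-r)*Real.sqrt (1+x) ≤ |x - r| * (Real.sqrt (1-x) * Real.sqrt (1+x)) := by
      have h := mul_le_mul hrx hb1 hpos.le (abs_nonneg _)
      exact (mul_le_mul_of_nonneg_right h hpx.le).trans_eq (by ring)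
    calc |(T ℝ (n:ℤ)).eval x| / (|x - r| * (Real.sqrt (1-x) * Real.sqrt (1+x)))
        ≤ 1 / (ε*Real.sqrt (1-r)*Real.sqrt (1+x)) :=
          div_le_div₀ zero_le_one hT (by positivity) hd
      _ = 1 / (ε * Real.sqrt (1-r)) * (1 / Real.sqrt (1+x)) := by
          rw [div_mul_div_comm, one_mul]

lemma integrable_right (n : ℕ) {r ε : ℝ} (hr1 : -1 < r) (hr2 : r < 1) (hε : 0 < ε)
    (hεδ : ε < 1 - r) :
    IntervalIntegrable (fun s => (T ℝ (n:ℤ)).eval s / ((s - r) * Real.sqrt (1 - s^2)))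
      volume (r + ε) 1 := by
  have hab : r + ε ≤ (1:ℝ) := by linarith
  have hg : IntervalIntegrable (fun x : ℝ => (1/(ε * Real.sqrt (1+r))) * (1 - x) ^ (-(1/2) : ℝ))
      volume (r + ε) 1 := by
    have h0 : IntervalIntegrable (fun x : ℝ => x ^ (-(1/2) : ℝ)) volume 0 (1 - (r+ε)) :=
      intervalIntegrable_rpow' (by norm_num)
    have := (h0.comp_sub_left 1)
    norm_num at this
    have h2 := this.symm.const_mul (1/(ε * Real.sqrt (1+r)))
    simpa using h2
  apply hg.mono_fun
  · rw [uIoc_of_le hab, ← MeasureTheory.Measure.restrict_congr_set MeasureTheory.Ioo_ae_eq_Ioc]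
    apply ContinuousOn.aestronglyMeasurable _ measurableSet_Ioo
    intro x hx
    have hx1 : r + ε < x := hx.1
    have hx2 : x < 1 := hx.2
    have h1s : (0:ℝ) < 1 - x^2 := by nlinarith
    apply ContinuousWithinAt.div
    · exact (Polynomial.continuous _).continuousWithinAt
    · exact (((continuous_id.sub continuous_const).mul
        ((continuous_const.sub (continuous_pow 2)).sqrt)).continuousWithinAt)
    · have : x - r ≠ 0 := by intro h; nlinarith [sub_eq_zero.mp h]
      exact mul_ne_zero this (Real.sqrt_ne_zero'.mpr h1s)
  · rw [Filter.EventuallyLE, ae_restrict_iff' measurableSet_uIoc]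
    refine Eventually.of_forall ?_
    intro x hx
    rw [uIoc_of_le hab] at hx
    have hx1 : r + ε < x := hx.1
    have hx2' : x ≤ 1 := hx.2
    have hx1' : -1 ≤ x := by linarith
    have h1x : 0 ≤ 1 - x := by linarith
    have h1px : 0 < 1 + x := by linarith
    have hpos : 0 < Real.sqrt (1+r) := Real.sqrt_pos.mpr (by linarith)
    have hsm : Real.sqrt (1 - x^2) = Real.sqrt (1-x) * Real.sqrt (1+x) := by
      rw [← Real.sqrt_mul h1x]
      ring_nf
    have hrx : ε ≤ |x - r| := by
      rw [abs_of_nonneg (by linarith)]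
      linarith
    have hb1 : Real.sqrt (1+r) ≤ Real.sqrt (1+x) := Real.sqrt_le_sqrt (by linarith)
    have hrpow : ((1 - x) ^ (-(1/2) : ℝ)) = 1 / Real.sqrt (1-x) := by
      rw [Real.rpow_neg h1x, Real.sqrt_eq_rpow]
      norm_num
    simp only [norm_div, norm_mul, Real.norm_eq_abs]
    rw [hrpow, abs_of_pos hε, abs_of_pos hpos, abs_one,
      abs_of_nonneg (Real.sqrt_nonneg (1-x^2)), hsm,
      abs_of_nonneg (by positivity : (0:ℝ) ≤ 1 / Real.sqrt (1-x))]
    have hT := absT_le n hx1' hx2'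
    rcases eq_or_lt_of_le hx2' with heq | hlt
    · subst heq
      simp [Real.sqrt_zero]
    · have hsx : 0 < Real.sqrt (1-x) := Real.sqrt_pos.mpr (by linarith)
      have hpx : 0 < Real.sqrt (1+x) := Real.sqrt_pos.mpr h1px
      have hd : ε*Real.sqrt (1+r)*Real.sqrt (1-x) ≤ |x - r| * (Real.sqrt (1-x) * Real.sqrt (1+x)) := by
        have h := mul_le_mul hrx hb1 hpos.le (abs_nonneg _)
        exact (mul_le_mul_of_nonneg_right h hsx.le).trans_eq (by ring)
      calc |(T ℝ (n:ℤ)).eval x| / (|x - r| * (Real.sqrt (1-x) * Real.sqrt (1+x)))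
          ≤ 1 / (ε*Real.sqrt (1+r)*Real.sqrt (1-x)) :=
            div_le_div₀ zero_le_one hT (by positivity) hd
        _ = 1 / (ε * Real.sqrt (1+r)) * (1 / Real.sqrt (1-x)) := by
            rw [div_mul_div_comm, one_mul]

lemma Phi_contAt (n : ℕ) {r : ℝ} (hr1 : -1 < r) (hr2 : r < 1) {x : ℝ}
    (hx1 : -1 ≤ x) (hx2 : x ≤ 1) (hne : x ≠ r) : ContinuousAt (Phi n r) x := by
  have hqc : Continuous (fun t : ℝ => Real.sqrt (1 - t^2)) :=
    (continuous_const.sub (continuous_pow 2)).sqrt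
  have hNc : Continuous (fun t : ℝ => 1 - r*t - Real.sqrt (1-r^2) * Real.sqrt (1-t^2)) :=
    ((continuous_const.sub (continuous_const.mul continuous_id)).sub (continuous_const.mul hqc))
  have hN : (1 - r*x - Real.sqrt (1-r^2) * Real.sqrt (1-x^2)) ≠ 0 :=
    (Npos hr1 hr2 hx1 hx2 hne).ne'
  have h1 : ContinuousAt (fun t : ℝ =>
      Real.log (1 - r*t - Real.sqrt (1-r^2) * Real.sqrt (1-t^2))) x :=
    hNc.continuousAt.log hN
  have h2 : ContinuousAt (fun t : ℝ => Real.log (t - r)) x := by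
    exact (continuousAt_id.sub continuousAt_const).log (sub_ne_zero.mpr hne)
  have h3 : ContinuousAt (fun t : ℝ => ∑ j ∈ Finset.range (n-1),
      (2 * (U ℝ (j:ℤ)).eval r / ((n:ℝ) - 1 - j)) *
        (Real.sqrt (1-t^2) * (U ℝ ((n:ℤ)-2-j)).eval t)) x := by
    apply Continuous.continuousAt
    apply continuous_finset_sum
    intro j hj
    exact continuous_const.mul (hqc.mul (Polynomial.continuous _))
  unfold Phi
  exact ((((h1.sub h2).const_mul _).const_mul _).add
    ((Real.continuous_arcsin.continuousAt).const_mul _)).sub h3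

lemma Phi_one (n : ℕ) {r : ℝ} (hr1 : -1 < r) (hr2 : r < 1) :
    Phi n r 1 = (U ℝ ((n:ℤ)-1)).eval r * (π/2) := by
  unfold Phi
  norm_num [Real.arcsin_one]

lemma Phi_neg_one (n : ℕ) {r : ℝ} (hr1 : -1 < r) (hr2 : r < 1) :
    Phi n r (-1) = (U ℝ ((n:ℤ)-1)).eval r * (-(π/2)) := by
  unfold Phi
  norm_num [Real.arcsin_neg_one]
  rw [show (-1:ℝ) - r = -(1+r) by ring, Real.log_neg_eq_log]
  norm_num

lemma pv_limit (n : ℕ) {r : ℝ} (hr1 : -1 < r) (hr2 : r < 1) :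
    Tendsto (fun ε : ℝ =>
        (∫ s in (-1:ℝ)..(r - ε), (T ℝ (n:ℤ)).eval s / ((s - r) * Real.sqrt (1 - s ^ 2))) +
        ∫ s in (r + ε)..(1:ℝ), (T ℝ (n:ℤ)).eval s / ((s - r) * Real.sqrt (1 - s ^ 2)))
      (nhdsWithin 0 (Set.Ioi 0)) (nhds (π * (U ℝ ((n:ℤ)-1)).eval r)) := by
  set w := Real.sqrt (1-r^2) with hwdef
  have h1r : (0:ℝ) < 1 - r^2 := by nlinarith
  have hw0 : 0 < w := Real.sqrt_pos.mpr h1r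
  have hw2 : w^2 = 1-r^2 := Real.sq_sqrt h1r.le
  set δ := min (1+r) (1-r) with hδdef
  have hδ0 : 0 < δ := lt_min (by linarith) (by linarith)
  have hmem : Ioo (0:ℝ) δ ∈ nhdsWithin (0:ℝ) (Set.Ioi 0) :=
    Ioo_mem_nhdsGT_of_mem ⟨le_refl 0, hδ0⟩
  -- Step A: eventual form
  have hA : ∀ ε ∈ Ioo (0:ℝ) δ,
      ((∫ s in (-1:ℝ)..(r - ε), (T ℝ (n:ℤ)).eval s / ((s - r) * Real.sqrt (1 - s ^ 2))) +
        ∫ s in (r + ε)..(1:ℝ), (T ℝ (n:ℤ)).eval s / ((s - r) * Real.sqrt (1 - s ^ 2)))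
      = (Phi n r (r - ε) - Phi n r (-1)) + (Phi n r 1 - Phi n r (r + ε)) := by
    intro ε hε
    obtain ⟨hε0, hεδ⟩ := hε
    have hεr1 : ε < 1 + r := lt_of_lt_of_le hεδ (min_le_left _ _)
    have hεr2 : ε < 1 - r := lt_of_lt_of_le hεδ (min_le_right _ _)
    have hI1 : (∫ s in (-1:ℝ)..(r - ε), (T ℝ (n:ℤ)).eval s / ((s - r) * Real.sqrt (1 - s ^ 2)))
        = Phi n r (r - ε) - Phi n r (-1) := by
      apply integral_eq_sub_of_hasDerivAt_of_le (by linarith)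
      · intro x hx
        have hx1 : -1 ≤ x := hx.1
        have hx2 : x ≤ r - ε := hx.2
        exact (Phi_contAt n hr1 hr2 hx1 (by linarith) (by intro h; rw [h] at hx2; linarith)).continuousWithinAt
      · intro x hx
        exact Phi_hasDeriv n hr1 hr2 hx.1 (by rcases hx with ⟨a,b⟩; linarith)
          (by rcases hx with ⟨a,b⟩; intro h; rw [h] at b; linarith)
      · exact integrable_left n hr1 hr2 hε0 hεr1
    have hI2 : (∫ s in (r + ε)..(1:ℝ), (T ℝ (n:ℤ)).eval s / ((s - r) * Real.sqrt (1 - s ^ 2)))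
        = Phi n r 1 - Phi n r (r + ε) := by
      apply integral_eq_sub_of_hasDerivAt_of_le (by linarith)
      · intro x hx
        have hx1 : r + ε ≤ x := hx.1
        have hx2 : x ≤ 1 := hx.2
        exact (Phi_contAt n hr1 hr2 (by linarith) hx2 (by intro h; rw [h] at hx1; linarith)).continuousWithinAt
      · intro x hx
        exact Phi_hasDeriv n hr1 hr2 (by rcases hx with ⟨a,b⟩; linarith) hx.2
          (by rcases hx with ⟨a,b⟩; intro h; rw [h] at a; linarith)
      · exact integrable_right n hr1 hr2 hε0 hεr2
    rw [hI1, hI2]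
  -- Step B : the Psi part
  set Psi : ℝ → ℝ := fun t => (U ℝ ((n:ℤ)-1)).eval r * Real.arcsin t
    - ∑ j ∈ Finset.range (n-1),
        (2 * (U ℝ (j:ℤ)).eval r / ((n:ℝ) - 1 - j)) * (Real.sqrt (1-t^2) * (U ℝ ((n:ℤ)-2-j)).eval t)
    with hPsidef
  have hqc : Continuous (fun t : ℝ => Real.sqrt (1 - t^2)) :=
    (continuous_const.sub (continuous_pow 2)).sqrt
  have hPsiCont : Continuous Psi := by
    rw [hPsidef]
    apply Continuous.sub
    · exact continuous_const.mul Real.continuous_arcsin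
    · apply continuous_finset_sum
      intro j hj
      exact continuous_const.mul (hqc.mul (Polynomial.continuous _))
  have hPhi_eq : ∀ t, Phi n r t = (T ℝ (n:ℤ)).eval r *
      ((1/w) * (Real.log (1 - r*t - w * Real.sqrt (1-t^2)) - Real.log (t - r))) + Psi t := by
    intro t
    unfold Phi
    rw [hPsidef, ← hwdef]
    ring
  have t1 : Tendsto (fun ε : ℝ => r - ε) (nhds 0) (nhds r) := by
    have : Tendsto (fun ε : ℝ => ε) (nhds 0) (nhds 0) := Filter.tendsto_id
    simpa using (tendsto_const_nhds (x := r)).sub this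
  have t2 : Tendsto (fun ε : ℝ => r + ε) (nhds 0) (nhds r) := by
    have : Tendsto (fun ε : ℝ => ε) (nhds 0) (nhds 0) := Filter.tendsto_id
    simpa using (tendsto_const_nhds (x := r)).add this
  have htendPsi : Tendsto (fun ε : ℝ => Psi (r - ε) - Psi (r + ε)) (nhds 0) (nhds 0) := by
    have := (hPsiCont.continuousAt.tendsto.comp t1).sub (hPsiCont.continuousAt.tendsto.comp t2)
    simpa using this
  -- Step B' : the G part
  set Dm : ℝ → ℝ := fun ε => 1 - r^2 + r*ε + w*Real.sqrt (1-(r-ε)^2) with hDmdef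
  set Dp : ℝ → ℝ := fun ε => 1 - r^2 - r*ε + w*Real.sqrt (1-(r+ε)^2) with hDpdef
  have hDmpos : ∀ ε ∈ Ioo (0:ℝ) δ, 0 < Dm ε := by
    intro ε hε
    obtain ⟨hε0, hεδ⟩ := hε
    have hεr1 : ε < 1 + r := lt_of_lt_of_le hεδ (min_le_left _ _)
    have hbase : 0 < 1 - r^2 + r*ε := by
      rcases le_or_gt 0 r with h | h
      · nlinarith [mul_nonneg h hε0.le]
      · nlinarith [mul_le_mul_of_nonneg_left hεr1.le (neg_nonneg.mpr h.le)]
    have := mul_nonneg hw0.le (Real.sqrt_nonneg (1-(r-ε)^2))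
    rw [hDmdef]
    dsimp only
    linarith
  have hDppos : ∀ ε ∈ Ioo (0:ℝ) δ, 0 < Dp ε := by
    intro ε hε
    obtain ⟨hε0, hεδ⟩ := hε
    have hεr2 : ε < 1 - r := lt_of_lt_of_le hεδ (min_le_right _ _)
    have hbase : 0 < 1 - r^2 - r*ε := by
      rcases le_or_gt 0 r with h | h
      · nlinarith [mul_le_mul_of_nonneg_left hεr2.le h]
      · nlinarith [mul_pos (neg_pos.mpr h) hε0]
    have := mul_nonneg hw0.le (Real.sqrt_nonneg (1-(r+ε)^2))
    rw [hDpdef]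
    dsimp only
    linarith
  have hlogNm : ∀ ε ∈ Ioo (0:ℝ) δ,
      Real.log (1 - r*(r-ε) - w*Real.sqrt (1-(r-ε)^2)) = Real.log (ε^2) - Real.log (Dm ε) := by
    intro ε hε
    obtain ⟨hε0, hεδ⟩ := hε
    have hεr1 : ε < 1 + r := lt_of_lt_of_le hεδ (min_le_left _ _)
    have hqm2 : (Real.sqrt (1-(r-ε)^2))^2 = 1-(r-ε)^2 := Real.sq_sqrt (by nlinarith)
    have hNm : (1 - r*(r-ε) - w*Real.sqrt (1-(r-ε)^2)) * Dm ε = ε^2 := by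
      rw [hDmdef]
      dsimp only
      linear_combination (-((Real.sqrt (1-(r-ε)^2))^2))*hw2 + (-(1-r^2))*hqm2
    have hNeq : (1 - r*(r-ε) - w*Real.sqrt (1-(r-ε)^2)) = ε^2 / Dm ε := by
      field_simp [(hDmpos ε ⟨hε0, hεδ⟩).ne']
      linear_combination hNm
    rw [hNeq, Real.log_div (pow_ne_zero 2 hε0.ne') (hDmpos ε ⟨hε0, hεδ⟩).ne']
  have hlogNp : ∀ ε ∈ Ioo (0:ℝ) δ,
      Real.log (1 - r*(r+ε) - w*Real.sqrt (1-(r+ε)^2)) = Real.log (ε^2) - Real.log (Dp ε) := by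
    intro ε hε
    obtain ⟨hε0, hεδ⟩ := hε
    have hεr2 : ε < 1 - r := lt_of_lt_of_le hεδ (min_le_right _ _)
    have hqp2 : (Real.sqrt (1-(r+ε)^2))^2 = 1-(r+ε)^2 := Real.sq_sqrt (by nlinarith)
    have hNp : (1 - r*(r+ε) - w*Real.sqrt (1-(r+ε)^2)) * Dp ε = ε^2 := by
      rw [hDpdef]
      dsimp only
      linear_combination (-((Real.sqrt (1-(r+ε)^2))^2))*hw2 + (-(1-r^2))*hqp2
    have hNeq : (1 - r*(r+ε) - w*Real.sqrt (1-(r+ε)^2)) = ε^2 / Dp ε := by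
      field_simp [(hDppos ε ⟨hε0, hεδ⟩).ne']
      linear_combination hNp
    rw [hNeq, Real.log_div (pow_ne_zero 2 hε0.ne') (hDppos ε ⟨hε0, hεδ⟩).ne']
  -- tendsto of the G part
  have hDmc : ContinuousAt Dm 0 := by
    rw [hDmdef]
    apply ContinuousAt.add
    · exact (continuousAt_const.add (continuousAt_const.mul continuousAt_id))
    · exact continuousAt_const.mul ((Continuous.sqrt
        (continuous_const.sub ((continuous_const.sub continuous_id).pow 2))).continuousAt)
  have hDpc : ContinuousAt Dp 0 := by
    rw [hDpdef]
    apply ContinuousAt.add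
    · exact (continuousAt_const.sub (continuousAt_const.mul continuousAt_id))
    · exact continuousAt_const.mul ((Continuous.sqrt
        (continuous_const.sub ((continuous_const.add continuous_id).pow 2))).continuousAt)
  have hDm0 : Dm 0 = 2*(1-r^2) := by
    rw [hDmdef]
    dsimp only
    rw [show (1-(r-0)^2) = 1 - r^2 by ring, ← hwdef]
    nlinarith [hw2]
  have hDp0 : Dp 0 = 2*(1-r^2) := by
    rw [hDpdef]
    dsimp only
    rw [show (1-(r+0)^2) = 1 - r^2 by ring, ← hwdef]
    nlinarith [hw2]
  have htendG : Tendsto (fun ε : ℝ =>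
      (T ℝ (n:ℤ)).eval r * (1/w) * (Real.log (Dp ε) - Real.log (Dm ε))) (nhds 0) (nhds 0) := by
    have hne : Dm 0 ≠ 0 := by rw [hDm0]; positivity
    have hne' : Dp 0 ≠ 0 := by rw [hDp0]; positivity
    have h := ((hDpc.log hne').sub (hDmc.log hne)).tendsto.const_mul
      ((T ℝ (n:ℤ)).eval r * (1/w))
    have : (T ℝ (n:ℤ)).eval r * (1/w) * (Real.log (Dp 0) - Real.log (Dm 0)) = 0 := by
      rw [hDp0, hDm0]; ring
    simp only [Pi.sub_apply] at h
    rw [this] at h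
    exact h
  -- combine
  have htendPhidiff : Tendsto (fun ε : ℝ => Phi n r (r - ε) - Phi n r (r + ε))
      (nhdsWithin 0 (Set.Ioi 0)) (nhds 0) := by
    have hev : (fun ε : ℝ => Phi n r (r - ε) - Phi n r (r + ε)) =ᶠ[nhdsWithin 0 (Set.Ioi 0)]
        (fun ε : ℝ => (T ℝ (n:ℤ)).eval r * (1/w) * (Real.log (Dp ε) - Real.log (Dm ε))
          + (Psi (r - ε) - Psi (r + ε))) := by
      apply eventually_of_mem hmem
      intro ε hε
      dsimp only
      rw [hPhi_eq, hPhi_eq]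
      rw [show r - ε - r = -ε by ring, Real.log_neg_eq_log, show r + ε - r = ε by ring]
      rw [hlogNm ε hε, hlogNp ε hε]
      ring
    apply Tendsto.congr' hev.symm
    have := (htendG.add htendPsi).mono_left (nhdsWithin_le_nhds (s := Set.Ioi (0:ℝ)))
    simpa using this
  have hev2 : (fun ε : ℝ =>
      (∫ s in (-1:ℝ)..(r - ε), (T ℝ (n:ℤ)).eval s / ((s - r) * Real.sqrt (1 - s ^ 2))) +
        ∫ s in (r + ε)..(1:ℝ), (T ℝ (n:ℤ)).eval s / ((s - r) * Real.sqrt (1 - s ^ 2)))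
      =ᶠ[nhdsWithin 0 (Set.Ioi 0)]
      (fun ε : ℝ => (Phi n r (r - ε) - Phi n r (r + ε)) + π * (U ℝ ((n:ℤ)-1)).eval r) := by
    apply eventually_of_mem hmem
    intro ε hε
    dsimp only
    rw [hA ε hε, Phi_one n hr1 hr2, Phi_neg_one n hr1 hr2]
    ring
  apply Tendsto.congr' hev2.symm
  have := htendPhidiff.add (tendsto_const_nhds (x := π * (U ℝ ((n:ℤ)-1)).eval r))
  simpa using this

/-- Let `n ≥ 2` and let `F` be the Cauchy principal value
`F(r) = ⨍_{-1}^{1} T_n(s)/((s-r)√(1-s²)) ds` on `(-1,1)`. Then `F` is differentiable on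
`(-1,1)` with `F'(r) = (π/(1-r²)) (((n+1)/2) U_{n-2}(r) - ((n-1)/2) U_n(r))`, the Hadamard
finite-part integral `⨎_{-1}^{1} T_n(s)/((s-r)² √(1-s²)) ds`. -/
theorem hfp2_T_m0 (n : ℕ) (hn : 2 ≤ n) (F : ℝ → ℝ)
    (hF : ∀ r ∈ Set.Ioo (-1 : ℝ) 1,
      Filter.Tendsto
        (fun ε : ℝ =>
          (∫ s in (-1 : ℝ)..(r - ε),
              (Polynomial.Chebyshev.T ℝ n).eval s / ((s - r) * Real.sqrt (1 - s ^ 2))) +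
          ∫ s in (r + ε)..(1 : ℝ),
              (Polynomial.Chebyshev.T ℝ n).eval s / ((s - r) * Real.sqrt (1 - s ^ 2)))
        (nhdsWithin 0 (Set.Ioi 0)) (nhds (F r))) :
    ∀ r ∈ Set.Ioo (-1 : ℝ) 1,
      HasDerivAt F
        (Real.pi / (1 - r ^ 2) *
          (((n : ℝ) + 1) / 2 * (Polynomial.Chebyshev.U ℝ ((n : ℤ) - 2)).eval r -
           ((n : ℝ) - 1) / 2 * (Polynomial.Chebyshev.U ℝ (n : ℤ)).eval r)) r := by
  intro r hr
  have hFeq : ∀ x ∈ Set.Ioo (-1:ℝ) 1, F x = π * (U ℝ ((n:ℤ)-1)).eval x := by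
    intro x hx
    exact tendsto_nhds_unique (hF x hx) (pv_limit n hx.1 hx.2)
  have hg : HasDerivAt (fun x : ℝ => π * (U ℝ ((n:ℤ)-1)).eval x)
      (π * (derivative (U ℝ ((n:ℤ)-1))).eval r) r :=
    ((U ℝ ((n:ℤ)-1)).hasDerivAt r).const_mul π
  have h1r : (0:ℝ) < 1 - r^2 := by nlinarith [hr.1, hr.2]
  have hkey := U_deriv_eval ((n:ℤ)-1) r
  rw [show ((n:ℤ)-1)+1 = (n:ℤ) by ring] at hkey
  push_cast at hkey
  have hT := congrArg (Polynomial.eval r) (T_eq_U_sub_X_mul_U ℝ (n:ℤ))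
  simp only [Polynomial.eval_sub, Polynomial.eval_mul, Polynomial.eval_X] at hT
  have hrec := congrArg (Polynomial.eval r) (U_sub_two ℝ (n:ℤ))
  simp only [Polynomial.eval_sub, Polynomial.eval_mul, Polynomial.eval_ofNat,
    Polynomial.eval_X] at hrec
  have hval : π * (derivative (U ℝ ((n:ℤ)-1))).eval r
      = Real.pi / (1 - r ^ 2) *
          (((n : ℝ) + 1) / 2 * (U ℝ ((n : ℤ) - 2)).eval r -
           ((n : ℝ) - 1) / 2 * (U ℝ (n : ℤ)).eval r) := by
    rw [div_mul_eq_mul_div, eq_div_iff h1r.ne']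
    linear_combination π*hkey - π*(n:ℝ)*hT - (π*((n:ℝ)+1)/2)*hrec
  rw [← hval]
  apply hg.congr_of_eventuallyEq
  filter_upwards [Ioo_mem_nhds hr.1 hr.2] with x hx
  exact hFeq x hx
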